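/- For the logistic cumulant a(η) = log(1 + e^η), the third derivative satisfies a'''(η) = a''(η)·(1 − 2σ(η)), and consequently |a'''(η)| ≤ a''(η) for all η ∈ ℝ (pseudo self-concordance of the logistic loss). -/

import Mathlib

/-- Pseudo self-concordance of the logistic loss: for a(η) = log(1 + e^η),
a'''(η) = a''(η)(1 − 2σ(η)), hence |a'''(η)| ≤ a''(η). -/
theorem stmt_17 :
    let a : ℝ → ℝ := fun η => Real.log (1 + Real.exp η)
    let σ : ℝ → ℝ := fun η => 1 / (1 + Real.exp (-η))
    ∀ η : ℝ, iteratedDeriv 3 a η = iteratedDeriv 2 a η * (1 - 2 * σ η) ∧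
      |iteratedDeriv 3 a η| ≤ iteratedDeriv 2 a η := by
  intro a σ η
  have hpos : ∀ x : ℝ, 0 < 1 + Real.exp x := fun x => by positivity
  have hd1 : ∀ x : ℝ, HasDerivAt a (Real.exp x / (1 + Real.exp x)) x := by
    intro x
    exact ((Real.hasDerivAt_exp x).const_add 1).log (hpos x).ne'
  have e1 : deriv a = fun x => Real.exp x / (1 + Real.exp x) :=
    funext fun x => (hd1 x).deriv
  have hd2 : ∀ x : ℝ, HasDerivAt (fun x => Real.exp x / (1 + Real.exp x))
      (Real.exp x / (1 + Real.exp x) ^ 2) x := by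
    intro x
    have h := (Real.hasDerivAt_exp x).div ((Real.hasDerivAt_exp x).const_add 1) (hpos x).ne'
    simp only [Pi.div_def] at h
    refine h.congr_deriv ?_
    field_simp
    ring
  have e2 : deriv (deriv a) = fun x => Real.exp x / (1 + Real.exp x) ^ 2 := by
    rw [e1]; exact funext fun x => (hd2 x).deriv
  have hd3 : ∀ x : ℝ, HasDerivAt (fun x => Real.exp x / (1 + Real.exp x) ^ 2)
      (Real.exp x * (1 - Real.exp x) / (1 + Real.exp x) ^ 3) x := by
    intro x
    have hden : HasDerivAt (fun y : ℝ => (1 + Real.exp y) ^ 2)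
        (2 * (1 + Real.exp x) * Real.exp x) x := by
      have := ((Real.hasDerivAt_exp x).const_add 1).pow 2
      simpa [Pi.pow_def, mul_comm, mul_assoc, mul_left_comm] using this
    have h := (Real.hasDerivAt_exp x).div hden (by positivity)
    simp only [Pi.div_def] at h
    refine h.congr_deriv ?_
    have hx := (hpos x).ne'
    field_simp
    ring
  have i2f : iteratedDeriv 2 a = fun x => Real.exp x / (1 + Real.exp x) ^ 2 := by
    rw [show (2 : ℕ) = 1 + 1 from rfl, iteratedDeriv_succ, iteratedDeriv_one, e2]
  have i3 : iteratedDeriv 3 a η = Real.exp η * (1 - Real.exp η) / (1 + Real.exp η) ^ 3 := by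
    rw [show (3 : ℕ) = 2 + 1 from rfl, iteratedDeriv_succ, i2f]
    exact (hd3 η).deriv
  have i2 : iteratedDeriv 2 a η = Real.exp η / (1 + Real.exp η) ^ 2 := by rw [i2f]
  have hE := Real.exp_pos η
  constructor
  · rw [i2, i3, show σ η = 1 / (1 + Real.exp (-η)) from rfl, Real.exp_neg]
    have h1 := (hpos η).ne'
    field_simp
    ring
  · rw [i2, i3, abs_div, abs_of_pos (by positivity : (0:ℝ) < (1 + Real.exp η) ^ 3),
      div_le_div_iff₀ (by positivity) (by positivity)]
    rw [abs_mul, abs_of_pos hE]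
    rcases abs_cases (1 - Real.exp η) with ⟨h, _⟩ | ⟨h, _⟩ <;> rw [h] <;>
      nlinarith [mul_pos (mul_pos hE (hpos η)) (hpos η), mul_pos hE (hpos η),
        mul_pos (mul_pos (mul_pos hE (hpos η)) (hpos η)) (hpos η)]
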